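/- Let D, N, M, k₁, k₂ ≥ 1 be integers. Let M_x, M_y, M_z ∈ ℝ^{D×D} be symmetric matrices, X ∈ ℝ^{D×N}, Y ∈ ℝ^{D×M}, P_x ∈ ℝ^{N×k₁}, P_z ∈ ℝ^{k₁×k₂}, P_y ∈ ℝ^{k₂×M}, and u_z ∈ ℝ^{k₁}, v_z ∈ ℝ^{k₂}. Define f : ℝ^{D×k₁} × ℝ^{D×k₂} → ℝ by f(Z_x, Z_y) := tr(Z_xᵀ(M_x+M_z)Z_x·diag(u_z)) + tr(Z_yᵀ(M_y+M_z)Z_y·diag(v_z)) − 2·tr(P_xᵀXᵀM_xZ_x) − 2·tr(P_zᵀZ_xᵀM_zZ_y) − 2·tr(P_yᵀZ_yᵀM_yY). Then f is differentiable everywhere, and its Fréchet derivative at (Z_x, Z_y) vanishes if and only if the pair of linear equations (M_x+M_z)·Z_x·diag(u_z) = M_x·X·P_x + M_z·Z_y·P_zᵀ and (M_y+M_z)·Z_y·diag(v_z) = M_y·Y·P_yᵀ + M_z·Z_x·P_z holds. -/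

import Mathlib

open Matrix

attribute [local instance] Matrix.normedAddCommGroup Matrix.normedSpace

/-- Derivative of a quadratic-plus-linear functional on a finite-dimensional space. -/
lemma quad_hasFDerivAt {E : Type*} [NormedAddCommGroup E] [NormedSpace ℝ E]
    [FiniteDimensional ℝ E]
    (b : E →ₗ[ℝ] E →ₗ[ℝ] ℝ) (l : E →ₗ[ℝ] ℝ) (z : E) :
    HasFDerivAt (fun w => b w w + l w)
      (LinearMap.toContinuousLinearMap (b z + b.flip z + l)) z := by
  classical
  let B : E →L[ℝ] E →L[ℝ] ℝ :=
    LinearMap.toContinuousLinearMap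
      ((LinearMap.toContinuousLinearMap :
          (E →ₗ[ℝ] ℝ) ≃ₗ[ℝ] (E →L[ℝ] ℝ)).toLinearMap.comp b)
  have hBapp : ∀ u v : E, B u v = b u v := by
    intro u v
    simp [B, LinearMap.coe_toContinuousLinearMap']
  have hB : IsBoundedBilinearMap ℝ (fun p : E × E => B p.1 p.2) :=
    B.isBoundedBilinearMap
  have hd : HasFDerivAt (fun w : E => (w, w))
      ((ContinuousLinearMap.id ℝ E).prod (ContinuousLinearMap.id ℝ E)) z :=
    (hasFDerivAt_id z).prodMk (hasFDerivAt_id z)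
  have h1' : HasFDerivAt ((fun p : E × E => B p.1 p.2) ∘ (fun w : E => (w, w)))
      ((hB.deriv (z, z)).comp
        ((ContinuousLinearMap.id ℝ E).prod (ContinuousLinearMap.id ℝ E))) z :=
    HasFDerivAt.comp (g := fun p : E × E => B p.1 p.2) (f := fun w : E => (w, w))
      z (hB.hasFDerivAt (z, z)) hd
  have h1 : HasFDerivAt (fun w : E => B w w)
      ((hB.deriv (z, z)).comp
        ((ContinuousLinearMap.id ℝ E).prod (ContinuousLinearMap.id ℝ E))) z := h1'
  have h2 : HasFDerivAt (fun w : E => l w)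
      (LinearMap.toContinuousLinearMap l) z :=
    (LinearMap.toContinuousLinearMap l).hasFDerivAt
  have h3 := h1.add h2
  have hfun : (fun w : E => b w w + l w) = fun w : E => B w w + l w := by
    funext w; rw [hBapp]
  rw [hfun]
  refine h3.congr_fderiv ?_
  ext v
  simp [hBapp, IsBoundedBilinearMap.deriv_apply, LinearMap.coe_toContinuousLinearMap']

/-- A real matrix with vanishing Frobenius norm squared is zero. -/
lemma eq_zero_of_trace_transpose_mul_self {m n : ℕ}
    (A : Matrix (Fin m) (Fin n) ℝ) (h : (Aᵀ * A).trace = 0) : A = 0 := by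
  have hsum : ∑ j : Fin n, ∑ i : Fin m, A i j ^ 2 = 0 := by
    simpa [Matrix.trace, Matrix.mul_apply, Matrix.diag, sq] using h
  have hz : ∀ j : Fin n, ∀ i : Fin m, A i j = 0 := by
    intro j i
    have h1 := (Finset.sum_eq_zero_iff_of_nonneg (fun j _ => by positivity)).mp hsum j
      (Finset.mem_univ j)
    have h2 := (Finset.sum_eq_zero_iff_of_nonneg (fun i _ => by positivity)).mp h1 i
      (Finset.mem_univ i)
    exact pow_eq_zero_iff (by norm_num) |>.mp h2
  ext i j
  simp [hz j i]

/-- The LOT objective, written as an explicit function of the anchor matrices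
`(Z_x, Z_y)` (with plans and marginals held fixed), is everywhere differentiable,
and its Fréchet derivative vanishes at `(Z_x, Z_y)` if and only if
`(M_x+M_z) Z_x diag(u_z) = M_x X P_x + M_z Z_y P_zᵀ` and
`(M_y+M_z) Z_y diag(v_z) = M_y Y P_yᵀ + M_z Z_x P_z`. -/
theorem lot_anchor_first_order (D N M k₁ k₂ : ℕ)
    (hD : 1 ≤ D) (hN : 1 ≤ N) (hM : 1 ≤ M) (hk₁ : 1 ≤ k₁) (hk₂ : 1 ≤ k₂)
    (Mx My Mz : Matrix (Fin D) (Fin D) ℝ)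
    (hMx : Mxᵀ = Mx) (hMy : Myᵀ = My) (hMz : Mzᵀ = Mz)
    (X : Matrix (Fin D) (Fin N) ℝ) (Y : Matrix (Fin D) (Fin M) ℝ)
    (Px : Matrix (Fin N) (Fin k₁) ℝ) (Pz : Matrix (Fin k₁) (Fin k₂) ℝ)
    (Py : Matrix (Fin k₂) (Fin M) ℝ)
    (uz : Fin k₁ → ℝ) (vz : Fin k₂ → ℝ) :
    Differentiable ℝ
      (fun Z : Matrix (Fin D) (Fin k₁) ℝ × Matrix (Fin D) (Fin k₂) ℝ =>
        (Z.1ᵀ * (Mx + Mz) * Z.1 * diagonal uz).trace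
          + (Z.2ᵀ * (My + Mz) * Z.2 * diagonal vz).trace
          - 2 * (Pxᵀ * Xᵀ * Mx * Z.1).trace
          - 2 * (Pzᵀ * Z.1ᵀ * Mz * Z.2).trace
          - 2 * (Pyᵀ * Z.2ᵀ * My * Y).trace) ∧
    ∀ (Zx : Matrix (Fin D) (Fin k₁) ℝ) (Zy : Matrix (Fin D) (Fin k₂) ℝ),
      fderiv ℝ
        (fun Z : Matrix (Fin D) (Fin k₁) ℝ × Matrix (Fin D) (Fin k₂) ℝ =>
          (Z.1ᵀ * (Mx + Mz) * Z.1 * diagonal uz).trace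
            + (Z.2ᵀ * (My + Mz) * Z.2 * diagonal vz).trace
            - 2 * (Pxᵀ * Xᵀ * Mx * Z.1).trace
            - 2 * (Pzᵀ * Z.1ᵀ * Mz * Z.2).trace
            - 2 * (Pyᵀ * Z.2ᵀ * My * Y).trace) (Zx, Zy) = 0 ↔
      ((Mx + Mz) * Zx * diagonal uz = Mx * X * Px + Mz * Zy * Pzᵀ ∧
       (My + Mz) * Zy * diagonal vz = My * Y * Pyᵀ + Mz * Zx * Pz) := by
  classical
  -- the bilinear part
  let b : (Matrix (Fin D) (Fin k₁) ℝ × Matrix (Fin D) (Fin k₂) ℝ) →ₗ[ℝ] (Matrix (Fin D) (Fin k₁) ℝ × Matrix (Fin D) (Fin k₂) ℝ) →ₗ[ℝ] ℝ := LinearMap.mk₂ ℝ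
    (fun Z W : (Matrix (Fin D) (Fin k₁) ℝ × Matrix (Fin D) (Fin k₂) ℝ) =>
      (Z.1ᵀ * (Mx + Mz) * W.1 * diagonal uz).trace
        + (Z.2ᵀ * (My + Mz) * W.2 * diagonal vz).trace
        - 2 * (Pzᵀ * Z.1ᵀ * Mz * W.2).trace)
    (by
      intro Z Z' W
      simp [Matrix.add_mul, Matrix.mul_add, Matrix.trace_add, Matrix.transpose_add,
        Prod.fst_add, Prod.snd_add]
      ring)
    (by
      intro c Z W
      simp [Matrix.smul_mul, Matrix.mul_smul, Matrix.trace_smul, Matrix.transpose_smul,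
        smul_eq_mul, Prod.smul_fst, Prod.smul_snd]
      ring)
    (by
      intro Z W W'
      simp [Matrix.add_mul, Matrix.mul_add, Matrix.trace_add,
        Prod.fst_add, Prod.snd_add]
      ring)
    (by
      intro c Z W
      simp [Matrix.smul_mul, Matrix.mul_smul, Matrix.trace_smul, smul_eq_mul,
        Prod.smul_fst, Prod.smul_snd]
      ring)
  -- the linear part
  let l : (Matrix (Fin D) (Fin k₁) ℝ × Matrix (Fin D) (Fin k₂) ℝ) →ₗ[ℝ] ℝ :=
    { toFun := fun Z : (Matrix (Fin D) (Fin k₁) ℝ × Matrix (Fin D) (Fin k₂) ℝ) =>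
        -2 * (Pxᵀ * Xᵀ * Mx * Z.1).trace - 2 * (Pyᵀ * Z.2ᵀ * My * Y).trace
      map_add' := by
        intro Z W
        simp [Matrix.add_mul, Matrix.mul_add, Matrix.trace_add, Matrix.transpose_add,
          Prod.fst_add, Prod.snd_add]
        ring
      map_smul' := by
        intro c Z
        simp [Matrix.smul_mul, Matrix.mul_smul, Matrix.trace_smul, Matrix.transpose_smul,
          smul_eq_mul, Prod.smul_fst, Prod.smul_snd]
        ring }
  have hfun : (fun Z : (Matrix (Fin D) (Fin k₁) ℝ × Matrix (Fin D) (Fin k₂) ℝ) =>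
      (Z.1ᵀ * (Mx + Mz) * Z.1 * diagonal uz).trace
        + (Z.2ᵀ * (My + Mz) * Z.2 * diagonal vz).trace
        - 2 * (Pxᵀ * Xᵀ * Mx * Z.1).trace
        - 2 * (Pzᵀ * Z.1ᵀ * Mz * Z.2).trace
        - 2 * (Pyᵀ * Z.2ᵀ * My * Y).trace) = fun Z : (Matrix (Fin D) (Fin k₁) ℝ × Matrix (Fin D) (Fin k₂) ℝ) => b Z Z + l Z := by
    funext Z
    simp only [b, l, LinearMap.mk₂_apply, LinearMap.coe_mk, AddHom.coe_mk]
    ring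
  have hderiv : ∀ z : (Matrix (Fin D) (Fin k₁) ℝ × Matrix (Fin D) (Fin k₂) ℝ), HasFDerivAt (fun Z : (Matrix (Fin D) (Fin k₁) ℝ × Matrix (Fin D) (Fin k₂) ℝ) =>
      (Z.1ᵀ * (Mx + Mz) * Z.1 * diagonal uz).trace
        + (Z.2ᵀ * (My + Mz) * Z.2 * diagonal vz).trace
        - 2 * (Pxᵀ * Xᵀ * Mx * Z.1).trace
        - 2 * (Pzᵀ * Z.1ᵀ * Mz * Z.2).trace
        - 2 * (Pyᵀ * Z.2ᵀ * My * Y).trace)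
      (LinearMap.toContinuousLinearMap (b z + b.flip z + l)) z := by
    intro z
    rw [hfun]
    exact quad_hasFDerivAt b l z
  constructor
  · intro z
    exact (hderiv z).differentiableAt
  · intro Zx Zy
    rw [(hderiv (Zx, Zy)).fderiv]
    -- gradient matrices
    set Gx : Matrix (Fin D) (Fin k₁) ℝ :=
      (Mx + Mz) * Zx * diagonal uz - (Mx * X * Px + Mz * Zy * Pzᵀ) with hGx
    set Gy : Matrix (Fin D) (Fin k₂) ℝ :=
      (My + Mz) * Zy * diagonal vz - (My * Y * Pyᵀ + Mz * Zx * Pz) with hGy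
    have key : ∀ H : (Matrix (Fin D) (Fin k₁) ℝ × Matrix (Fin D) (Fin k₂) ℝ),
        b (Zx, Zy) H + b H (Zx, Zy) + l H
          = 2 * (H.1ᵀ * Gx).trace + 2 * (H.2ᵀ * Gy).trace := by
      intro H
      obtain ⟨H1, H2⟩ := H
      simp only [b, l, LinearMap.mk₂_apply, LinearMap.flip_apply, LinearMap.coe_mk,
        AddHom.coe_mk, hGx, hGy]
      -- rewrite each trace into the `tr (Hᵀ * ·)` form
      have e1 : (Zxᵀ * (Mx + Mz) * H1 * diagonal uz).trace
          = (H1ᵀ * ((Mx + Mz) * Zx * diagonal uz)).trace := by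
        rw [← Matrix.trace_transpose (Zxᵀ * (Mx + Mz) * H1 * diagonal uz)]
        simp only [Matrix.transpose_mul, Matrix.transpose_transpose,
          Matrix.diagonal_transpose, Matrix.transpose_add, hMx, hMz]
        rw [Matrix.trace_mul_comm]
        simp only [Matrix.mul_assoc]
      have e2 : (Zyᵀ * (My + Mz) * H2 * diagonal vz).trace
          = (H2ᵀ * ((My + Mz) * Zy * diagonal vz)).trace := by
        rw [← Matrix.trace_transpose (Zyᵀ * (My + Mz) * H2 * diagonal vz)]
        simp only [Matrix.transpose_mul, Matrix.transpose_transpose,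
          Matrix.diagonal_transpose, Matrix.transpose_add, hMy, hMz]
        rw [Matrix.trace_mul_comm]
        simp only [Matrix.mul_assoc]
      have e3 : (Pzᵀ * Zxᵀ * Mz * H2).trace = (H2ᵀ * (Mz * Zx * Pz)).trace := by
        rw [← Matrix.trace_transpose (Pzᵀ * Zxᵀ * Mz * H2)]
        simp only [Matrix.transpose_mul, Matrix.transpose_transpose, hMz,
          Matrix.mul_assoc]
      have e4 : (Pzᵀ * H1ᵀ * Mz * Zy).trace = (H1ᵀ * (Mz * Zy * Pzᵀ)).trace := by
        simp only [Matrix.mul_assoc]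
        rw [Matrix.trace_mul_comm]
        simp only [Matrix.mul_assoc]
      have e5 : (Pxᵀ * Xᵀ * Mx * H1).trace = (H1ᵀ * (Mx * X * Px)).trace := by
        rw [← Matrix.trace_transpose (Pxᵀ * Xᵀ * Mx * H1)]
        simp only [Matrix.transpose_mul, Matrix.transpose_transpose, hMx,
          Matrix.mul_assoc]
      have e6 : (Pyᵀ * H2ᵀ * My * Y).trace = (H2ᵀ * (My * Y * Pyᵀ)).trace := by
        simp only [Matrix.mul_assoc]
        rw [Matrix.trace_mul_comm]
        simp only [Matrix.mul_assoc]
      rw [e1, e2, e3, e4, e5, e6]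
      simp only [Matrix.mul_add, Matrix.add_mul, Matrix.mul_sub, Matrix.sub_mul,
        Matrix.trace_add, Matrix.trace_sub, Matrix.mul_assoc]
      ring
    constructor
    · intro h0
      have hall : ∀ H : (Matrix (Fin D) (Fin k₁) ℝ × Matrix (Fin D) (Fin k₂) ℝ), b (Zx, Zy) H + b H (Zx, Zy) + l H = 0 := by
        intro H
        have := congrArg (fun (T : (Matrix (Fin D) (Fin k₁) ℝ × Matrix (Fin D) (Fin k₂) ℝ) →L[ℝ] ℝ) => T H) h0
        simpa [LinearMap.coe_toContinuousLinearMap'] using this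
      have hGx0 : Gx = 0 := by
        have := hall (Gx, 0)
        rw [key (Gx, 0)] at this
        have h' : (2:ℝ) * (Gxᵀ * Gx).trace = 0 := by simpa using this
        exact eq_zero_of_trace_transpose_mul_self Gx (by linarith)
      have hGy0 : Gy = 0 := by
        have := hall (0, Gy)
        rw [key (0, Gy)] at this
        have h' : (2:ℝ) * (Gyᵀ * Gy).trace = 0 := by simpa using this
        exact eq_zero_of_trace_transpose_mul_self Gy (by linarith)
      exact ⟨sub_eq_zero.mp hGx0, sub_eq_zero.mp hGy0⟩
    · rintro ⟨h1, h2⟩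
      have hGx0 : Gx = 0 := sub_eq_zero.mpr h1
      have hGy0 : Gy = 0 := sub_eq_zero.mpr h2
      have hl : (b (Zx, Zy) + b.flip (Zx, Zy) + l) = 0 := by
        apply LinearMap.ext
        intro H
        simp only [LinearMap.add_apply, LinearMap.flip_apply, LinearMap.zero_apply]
        rw [key H, hGx0, hGy0]
        simp
      rw [hl]
      exact map_zero _
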